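/- Suppose g ∈ F_{q^r}[x] is Galois coprime, g_0 ∈ F_q[x], and g_0·g divides x^n − 1. Then for every 0 ≤ w ≤ n, the number of codewords of F_q-weight w in the cyclic code C_{g_0 g} ⊆ (F_{q^r})^n equals q^{n − r·deg g − deg g_0} multiplied by the number of words of Hamming weight n − w in the cyclic code of length n over F_{q^{r−1}} with generator polynomial g_0. -/

import Mathlib

open Polynomial

/-- Coefficientwise application of `x ↦ x^(q^i)` (the `i`-th power of the Frobenius
`σ : x ↦ x^q`) to a polynomial. -/
noncomputable def polyGal {F : Type*} [Field F] (q i : ℕ) (g : Polynomial F) : Polynomial F :=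
  ∑ j ∈ g.support, Polynomial.C ((g.coeff j) ^ (q ^ i)) * Polynomial.X ^ j

/-- `g ∈ F_{q^r}[x]` is Galois coprime: `gcd(g, g^τ) = 1` for every non-trivial
`τ ∈ Gal(F_{q^r}/F_q)`, the non-trivial automorphisms being `x ↦ x^(q^i)`, `1 ≤ i < r`. -/
def GaloisCoprime {F : Type*} [Field F] (q r : ℕ) (g : Polynomial F) : Prop :=
  ∀ i : ℕ, 0 < i → i < r → IsCoprime g (polyGal q i g)

/-- The polynomial of degree `< n` whose coefficient vector is the word `u`. -/
noncomputable def wordPoly {F : Type*} [Field F] {n : ℕ} (u : Fin n → F) : Polynomial F :=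
  ∑ j : Fin n, Polynomial.C (u j) * Polynomial.X ^ (j : ℕ)

/-- The `F_q`-weight of a word: the number of coordinates lying in the subfield `F_q`,
i.e. the set of roots of `x^q = x`. -/
noncomputable def fqWeight {F : Type*} [Field F] {n : ℕ} (q : ℕ) (u : Fin n → F) : ℕ :=
  Set.ncard {j : Fin n | (u j) ^ q = u j}

/-- The Hamming weight of a word: the number of nonzero coordinates. -/
noncomputable def hammingWt {F : Type*} [Field F] {n : ℕ} (u : Fin n → F) : ℕ :=
  Set.ncard {j : Fin n | u j ≠ 0}

section WordPoly
variable {F : Type*} [Field F] {n : ℕ}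

lemma wordPoly_coeff (u : Fin n → F) (j : ℕ) :
    (wordPoly u).coeff j = if h : j < n then u ⟨j, h⟩ else 0 := by
  unfold wordPoly
  rw [finset_sum_coeff]
  simp only [coeff_C_mul, coeff_X_pow]
  split
  · next h =>
    rw [Finset.sum_eq_single (⟨j, h⟩ : Fin n)]
    · simp
    · intro b _ hb
      simp only [mul_ite, mul_one, mul_zero, ite_eq_right_iff]
      intro hbj; exact absurd (Fin.ext hbj.symm) hb
    · simp
  · next h =>
    apply Finset.sum_eq_zero
    intro b _
    simp only [mul_ite, mul_one, mul_zero, ite_eq_right_iff]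
    intro hbj; exact absurd (hbj ▸ b.isLt) h

lemma wordPoly_degree_lt (u : Fin n → F) : (wordPoly u).degree < n := by
  apply lt_of_le_of_lt (degree_sum_le _ _)
  rw [Finset.sup_lt_iff (by exact_mod_cast WithBot.bot_lt_coe n)]
  intro b _
  apply lt_of_le_of_lt (degree_C_mul_X_pow_le (b:ℕ) _)
  exact_mod_cast b.isLt

lemma wordPoly_mem_degreeLT (u : Fin n → F) : wordPoly u ∈ degreeLT F n := by
  rw [mem_degreeLT]; exact wordPoly_degree_lt u

lemma wordPoly_of_coeff (f : Polynomial F) (hf : f.degree < n) :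
    wordPoly (fun j : Fin n => f.coeff j) = f := by
  ext j
  rw [wordPoly_coeff]
  split
  · rfl
  · next h => exact (coeff_eq_zero_of_degree_lt (lt_of_lt_of_le hf (by exact_mod_cast Nat.le_of_not_lt h))).symm

lemma wordPoly_injective : Function.Injective (wordPoly (F := F) (n := n)) := by
  intro u v h
  funext j
  have := congrArg (fun p => Polynomial.coeff p j) h
  simpa [wordPoly_coeff] using this

lemma wordPoly_add (u v : Fin n → F) : wordPoly (u + v) = wordPoly u + wordPoly v := by
  unfold wordPoly
  rw [← Finset.sum_add_distrib]
  congr 1; funext j; simp [add_mul]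

lemma wordPoly_sub (u v : Fin n → F) : wordPoly (u - v) = wordPoly u - wordPoly v := by
  unfold wordPoly
  rw [← Finset.sum_sub_distrib]
  congr 1; funext j; simp [sub_mul]

lemma wordPoly_map {E : Type*} [Field E] (φ : F →+* E) (u : Fin n → F) :
    (wordPoly u).map φ = wordPoly (fun j => φ (u j)) := by
  unfold wordPoly
  rw [Polynomial.map_sum]
  congr 1; funext j; simp

end WordPoly

section Counting
open Polynomial
variable {L : Type*} [Field L] [Fintype L] {n : ℕ}

lemma mul_wordPoly_degree_lt {h : Polynomial L} (hm : h.Monic) (hd : h.natDegree ≤ n)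
    (t : Fin (n - h.natDegree) → L) : (h * wordPoly t).degree < n := by
  rcases eq_or_ne (wordPoly t) 0 with h0 | h0
  · rw [h0, mul_zero, degree_zero]
    exact_mod_cast WithBot.bot_lt_coe n
  · rw [← natDegree_lt_iff_degree_lt (mul_ne_zero hm.ne_zero h0),
      natDegree_mul hm.ne_zero h0]
    have := (natDegree_lt_iff_degree_lt h0).mpr (wordPoly_degree_lt t)
    omega

lemma count_dvd (h : Polynomial L) (hm : h.Monic) (hd : h.natDegree ≤ n) :
    {u : Fin n → L | h ∣ wordPoly u}.ncard = (Fintype.card L) ^ (n - h.natDegree) := by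
  set d := h.natDegree with hdd
  set e : (Fin (n - d) → L) → (Fin n → L) := fun t j => (h * wordPoly t).coeff (j : ℕ) with he
  have key : ∀ t, wordPoly (e t) = h * wordPoly t := by
    intro t
    exact wordPoly_of_coeff _ (mul_wordPoly_degree_lt hm hd t)
  have hinj : Function.Injective e := by
    intro t₁ t₂ h12
    have : h * wordPoly t₁ = h * wordPoly t₂ := by
      rw [← key t₁, ← key t₂, h12]
    exact wordPoly_injective (mul_left_cancel₀ hm.ne_zero this)
  have hset : {u : Fin n → L | h ∣ wordPoly u} = Set.range e := by
    ext u
    constructor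
    · rintro ⟨s, hs⟩
      have hslt : s.degree < (n - d : ℕ) := by
        rcases eq_or_ne s 0 with h0 | h0
        · rw [h0, degree_zero]; exact_mod_cast WithBot.bot_lt_coe _
        · rw [← natDegree_lt_iff_degree_lt h0]
          have h1 : (wordPoly u).natDegree < n := by
            rw [natDegree_lt_iff_degree_lt (by rw [hs]; exact mul_ne_zero hm.ne_zero h0)]
            exact wordPoly_degree_lt u
          rw [hs, natDegree_mul hm.ne_zero h0] at h1
          omega
      refine ⟨fun j : Fin (n - d) => s.coeff j, ?_⟩
      have : wordPoly (fun j : Fin (n-d) => s.coeff (j:ℕ)) = s := wordPoly_of_coeff s hslt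
      funext j
      rw [he]
      simp only
      rw [this, ← hs, wordPoly_coeff]
      simp
    · rintro ⟨t, rfl⟩
      show h ∣ wordPoly (e t)
      rw [key t]
      exact ⟨wordPoly t, rfl⟩
  rw [hset, ← Set.image_univ, Set.ncard_image_of_injective _ hinj, Set.ncard_univ,
    Nat.card_eq_fintype_card, Fintype.card_fun]
  simp

end Counting

section Support
open Polynomial

/-- fixed points of x ↦ x^q are exactly the image of the subfield K with |K| = q -/
lemma fix_eq_range {q : ℕ} (hq2 : 2 ≤ q) {K F : Type*} [Field K] [Fintype K] [Field F]
    (hK : Fintype.card K = q) (φ : K →+* F) :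
    {x : F | x ^ q = x} = Set.range φ := by
  have hsub : Set.range φ ⊆ {x : F | x ^ q = x} := by
    rintro _ ⟨c, rfl⟩
    show φ c ^ q = φ c
    rw [← map_pow, ← hK, FiniteField.pow_card]
  classical
  have hdeg : ((X : F[X]) ^ q - X).natDegree = q := by
    have h1 : (X : F[X]).natDegree < ((X : F[X]) ^ q).natDegree := by
      simp [natDegree_X_pow]; omega
    rw [natDegree_sub_eq_left_of_natDegree_lt h1, natDegree_X_pow]
  have hne : ((X : F[X]) ^ q - X) ≠ 0 := by
    intro h0
    rw [h0] at hdeg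
    simp at hdeg; omega
  have hfin : {x : F | x ^ q = x}.Finite := by
    apply Set.Finite.subset (((X : F[X]) ^ q - X).roots.toFinset : Finset F).finite_toSet
    intro x hx
    have hx' : x ^ q = x := hx
    simp only [Finset.coe_sort_coe, Multiset.mem_toFinset, Finset.mem_coe, mem_roots']
    exact ⟨hne, by simp [IsRoot.def, sub_eq_zero, hx']⟩
  symm
  apply Set.eq_of_subset_of_ncard_le hsub _ hfin
  calc {x : F | x ^ q = x}.ncard ≤ (((X : F[X]) ^ q - X).roots.toFinset : Finset F).card := by
        rw [← Set.ncard_coe_finset]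
        apply Set.ncard_le_ncard _ (Finset.finite_toSet _)
        intro x hx
        have hx' : x ^ q = x := hx
        simp only [Finset.coe_sort_coe, Multiset.mem_toFinset, Finset.mem_coe, mem_roots']
        exact ⟨hne, by simp [IsRoot.def, sub_eq_zero, hx']⟩
    _ ≤ q := by
        exact le_trans (Multiset.toFinset_card_le _) (le_trans (card_roots' _) (le_of_eq hdeg))
    _ = (Set.range φ).ncard := by
        rw [← Set.image_univ, Set.ncard_image_of_injective _ φ.injective, Set.ncard_univ,
          Nat.card_eq_fintype_card, hK]

lemma polyGal_eq_map {F : Type*} [Field F] (q i : ℕ) (g : Polynomial F)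
    (σ : F →+* F) (hσ : ∀ x, σ x = x ^ q ^ i) : polyGal q i g = g.map σ := by
  conv_rhs => rw [g.as_sum_support_C_mul_X_pow]
  rw [Polynomial.map_sum]
  unfold polyGal
  congr 1
  funext j
  simp [hσ]

/-- the remainder-coefficients criterion for divisibility by a mapped monic polynomial -/
lemma dvd_wordPoly_iff {K L : Type*} [Field K] [Field L] (ι : K →+* L) {g₀ : Polynomial K}
    (h₀ : g₀.Monic) {n : ℕ} (u : Fin n → L) :
    g₀.map ι ∣ wordPoly u ↔
      ∀ m : ℕ, (∑ j : Fin n, ι ((Polynomial.X ^ (j : ℕ) %ₘ g₀).coeff m) * u j) = 0 := by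
  rw [← Polynomial.modByMonic_eq_zero_iff_dvd (h₀.map ι)]
  have hrem : wordPoly u %ₘ (g₀.map ι) =
      ∑ j : Fin n, Polynomial.C (u j) * ((Polynomial.X ^ (j : ℕ) %ₘ g₀).map ι) := by
    unfold wordPoly
    rw [← Polynomial.modByMonicHom_apply, map_sum]
    congr 1
    funext j
    rw [Polynomial.modByMonicHom_apply, ← Polynomial.smul_eq_C_mul,
      Polynomial.smul_modByMonic, Polynomial.map_modByMonic _ h₀]
    simp [Polynomial.smul_eq_C_mul]
  rw [hrem]
  rw [Polynomial.ext_iff]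
  apply forall_congr'
  intro m
  rw [Polynomial.finset_sum_coeff]
  simp only [Polynomial.coeff_C_mul, Polynomial.coeff_map, Polynomial.coeff_zero]
  rw [← Finset.sum_congr rfl (fun (j : Fin n) _ => mul_comm (ι ((Polynomial.X ^ (j:ℕ) %ₘ g₀).coeff m)) (u j))]

/-- counting a finite set fibered over another with constant fiber size -/
lemma ncard_eq_ncard_mul {α β : Type*} [Fintype α] [Fintype β] (S : Set α) (T : Set β)
    (f : α → β) (c : ℕ) (hmap : ∀ u ∈ S, f u ∈ T)
    (hfib : ∀ v ∈ T, {u ∈ S | f u = v}.ncard = c) : S.ncard = T.ncard * c := by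
  classical
  rw [Set.ncard_eq_toFinset_card' S, Set.ncard_eq_toFinset_card' T]
  rw [Finset.card_eq_sum_card_fiberwise (f := f) (t := T.toFinset)
    (fun x hx => Set.mem_toFinset.mpr (hmap x (Set.mem_toFinset.mp hx)))]
  rw [Finset.sum_congr rfl (fun v hv => ?_), Finset.sum_const, smul_eq_mul]
  rw [← hfib v (Set.mem_toFinset.mp hv)]
  rw [Set.ncard_eq_toFinset_card']
  congr 1
  ext u
  simp [Set.mem_toFinset]

end Support

/-- `g ∈ F_{q^r}[x]` Galois coprime, `g₀ ∈ F_q[x]`, `g₀·g ∣ x^n − 1`.  Then the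
number of codewords of `F_q`-weight `w` in `C_{g₀g} ⊆ (F_{q^r})^n` equals
`q^(n − r·deg g − deg g₀)` times the number of words of Hamming weight `n − w` in the cyclic
code of length `n` over `F_{q^{r−1}}` with generator polynomial `g₀`.  Here `K` plays the
role of `F_q`, `E` of `F_{q^{r−1}}` and `F` of `F_{q^r}`, with `φ : K → F` and `χ : K → E`
the field embeddings. -/
theorem stmt5 (q r n : ℕ) (hq : IsPrimePow q) (hr : 1 < r) (hn : 0 < n)
    (hcop : Nat.Coprime n q)
    (K : Type*) [Field K] [Fintype K] (hK : Fintype.card K = q)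
    (E : Type*) [Field E] [Fintype E] (hE : Fintype.card E = q ^ (r - 1))
    (F : Type*) [Field F] [Fintype F] (hF : Fintype.card F = q ^ r)
    (φ : K →+* F) (χ : K →+* E)
    (g : Polynomial F) (hmonic : g.Monic) (hGC : GaloisCoprime q r g)
    (g₀ : Polynomial K) (hmonic₀ : g₀.Monic)
    (hdvd : (g₀.map φ) * g ∣ (Polynomial.X ^ n - 1 : Polynomial F))
    (w : ℕ) (hw : w ≤ n) :
    {u : Fin n → F | (g₀.map φ) * g ∣ wordPoly u ∧ fqWeight q u = w}.ncard =
      q ^ (n - r * g.natDegree - g₀.natDegree) *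
        {v : Fin n → E | g₀.map χ ∣ wordPoly v ∧ hammingWt v = n - w}.ncard := by
  classical
  -- ===== characteristic and Frobenius setup =====
  obtain ⟨p, k, hp', hk0, hpk⟩ := hq
  have hp : p.Prime := hp'.nat_prime
  haveI : Fact p.Prime := ⟨hp⟩
  have hq2 : 2 ≤ q := by
    rw [← hpk]; calc 2 ≤ p := hp.two_le
    _ ≤ p ^ k := Nat.le_self_pow (by omega) p
  haveI hcharF : CharP F p := by
    have h0 : CharP F (ringChar F) := ringChar.charP F
    have hprime : (ringChar F).Prime := CharP.char_is_prime F (ringChar F)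
    obtain ⟨m, hm1, hm2⟩ := FiniteField.card F (ringChar F)
    have heq : (ringChar F) ^ (m : ℕ) = p ^ (k * r) := by
      rw [← hm2, hF, ← hpk, ← pow_mul]
    have hd : ringChar F ∣ p ^ (k * r) := by
      rw [← heq]
      exact dvd_pow_self (ringChar F) (by exact_mod_cast m.pos.ne')
    have : ringChar F = p :=
      (Nat.prime_dvd_prime_iff_eq hprime hp).mp (hprime.dvd_of_dvd_pow hd)
    exact this ▸ h0
  set σ : ℕ → (F →+* F) := fun i => iterateFrobenius F p (k*i) with hσdef
  have hσ_apply : ∀ i (x : F), σ i x = x ^ q ^ i := by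
    intro i x
    show iterateFrobenius F p (k*i) x = _
    rw [iterateFrobenius_def, ← hpk, ← pow_mul]
  have hcq : ∀ c : K, c ^ q = c := fun c => by rw [← hK]; exact FiniteField.pow_card c
  have hKfixPow : ∀ (c : K) (i : ℕ), c ^ q ^ i = c := by
    intro c i
    induction i with
    | zero => simp
    | succ i ih => rw [pow_succ, pow_mul, ih, hcq]
  have hσφ : ∀ i c, σ i (φ c) = φ c := by
    intro i c; rw [hσ_apply, ← map_pow, hKfixPow]
  have hσr : ∀ x : F, x ^ q ^ r = x := fun x => by
    rw [← hF]; exact FiniteField.pow_card x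
  have hσ_comp : ∀ i j, (σ i).comp (σ j) = σ (i + j) := by
    intro i j; ext x
    simp only [RingHom.coe_comp, Function.comp_apply, hσ_apply]
    rw [← pow_mul, ← pow_add, add_comm j i]
  -- conjugates of g
  set gi : ℕ → Polynomial F := fun i => g.map (σ i) with hgidef
  have hpolyGal : ∀ i, polyGal q i g = gi i := fun i => polyGal_eq_map q i g (σ i) (hσ_apply i)
  set a := g.natDegree with hadef
  set b := g₀.natDegree with hbdef
  -- ===== basic polynomial facts =====
  have hXn_deg : ((X : F[X]) ^ n - 1).natDegree = n := by
    rw [← Polynomial.C_1, Polynomial.natDegree_X_pow_sub_C]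
  have hXn_ne : ((X : F[X]) ^ n - 1) ≠ 0 := by
    intro h0; rw [h0] at hXn_deg; simp at hXn_deg; omega
  have hsep : ((X : F[X]) ^ n - 1).Separable := by
    have hnF : ((n : ℕ) : F) ≠ 0 := by
      rw [Ne, CharP.cast_eq_zero_iff F p]
      intro hpn
      have hpq : p ∣ q := by rw [← hpk]; exact dvd_pow_self p (by omega)
      have h1 : p ∣ 1 := hcop ▸ Nat.dvd_gcd hpn hpq
      have := Nat.le_of_dvd one_pos h1
      have := hp.two_le
      omega
    simpa using Polynomial.separable_X_pow_sub_C (1 : F) hnF one_ne_zero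
  have hbφ : (g₀.map φ).natDegree = b := g₀.natDegree_map φ
  have hbχ : (g₀.map χ).natDegree = b := g₀.natDegree_map χ
  have hmonicφ : (g₀.map φ).Monic := hmonic₀.map φ
  have hmonicχ : (g₀.map χ).Monic := hmonic₀.map χ
  have hGg_monic : ((g₀.map φ) * g).Monic := hmonicφ.mul hmonic
  have hGg_deg : ((g₀.map φ) * g).natDegree = b + a := by
    rw [Polynomial.natDegree_mul hmonicφ.ne_zero hmonic.ne_zero, hbφ]
  have hab : b + a ≤ n := by
    have := Polynomial.natDegree_le_of_dvd hdvd hXn_ne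
    rwa [hGg_deg, hXn_deg] at this
  -- conjugate facts
  have hgi_monic : ∀ i, (gi i).Monic := fun i => hmonic.map _
  have hgi_deg : ∀ i, (gi i).natDegree = a := fun i => g.natDegree_map _
  have hg_dvdXn : g ∣ (X : F[X]) ^ n - 1 := (dvd_mul_left g (g₀.map φ)).trans hdvd
  have hgφ_dvdXn : g₀.map φ ∣ (X : F[X]) ^ n - 1 := (dvd_mul_right (g₀.map φ) g).trans hdvd
  have hmapXn : ∀ i, ((X : F[X]) ^ n - 1).map (σ i) = (X : F[X]) ^ n - 1 := by
    intro i
    rw [Polynomial.map_sub, Polynomial.map_pow, Polynomial.map_X, Polynomial.map_one]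
  have hgi_dvd : ∀ i, gi i ∣ (X : F[X]) ^ n - 1 := by
    intro i
    have := Polynomial.map_dvd (σ i) hg_dvdXn
    rwa [hmapXn i] at this
  have hgφ_fix : ∀ i, (g₀.map φ).map (σ i) = g₀.map φ := by
    intro i
    rw [Polynomial.map_map]
    congr 1
    exact RingHom.ext fun c => hσφ i c
  -- coprimality facts
  have hcop_g₀g : IsCoprime (g₀.map φ) g := ((hsep.of_dvd hdvd).isCoprime)
  have hcopφ : ∀ i, IsCoprime (g₀.map φ) (gi i) := by
    intro i
    have h2 := (hcop_g₀g.map (Polynomial.mapRingHom (σ i)))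
    simpa [Polynomial.coe_mapRingHom, hgφ_fix i] using h2
  have hgi_cop : ∀ i j, i < j → j < r → IsCoprime (gi i) (gi j) := by
    intro i j hij hjr
    have h0 : IsCoprime g (polyGal q (j - i) g) := hGC (j - i) (by omega) (by omega)
    rw [hpolyGal] at h0
    have h2 := h0.map (Polynomial.mapRingHom (σ i))
    simpa only [Polynomial.coe_mapRingHom, hgidef, Polynomial.map_map, hσ_comp,
      Nat.add_sub_cancel' (le_of_lt hij)] using h2
  have hgi_pairwise : (↑(Finset.range r) : Set ℕ).Pairwise (Function.onFun IsCoprime gi) := by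
    intro i hi j hj hij
    simp only [Finset.coe_range, Set.mem_Iio] at hi hj
    rcases lt_or_gt_of_ne hij with h | h
    · exact hgi_cop i j h hj
    · exact (hgi_cop j i h hi).symm
  -- the norm-type product Q and its K-form P
  set Q : Polynomial F := ∏ i ∈ Finset.range r, gi i with hQdef
  have hQ_dvd : Q ∣ (X : F[X]) ^ n - 1 :=
    Finset.prod_dvd_of_coprime hgi_pairwise fun i _ => hgi_dvd i
  have hQ_monic : Q.Monic := Polynomial.monic_prod_of_monic _ _ fun i _ => hgi_monic i
  have hQ_deg : Q.natDegree = r * a := by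
    rw [Polynomial.natDegree_prod _ _ fun i _ => (hgi_monic i).ne_zero]
    simp [hgi_deg]
  have hgQ_cop : IsCoprime (g₀.map φ) Q := IsCoprime.prod_right fun i _ => hcopφ i
  have hg₀Q_dvd : (g₀.map φ) * Q ∣ (X : F[X]) ^ n - 1 := hgQ_cop.mul_dvd hgφ_dvdXn hQ_dvd
  have hbra : b + r * a ≤ n := by
    have h1 := Polynomial.natDegree_le_of_dvd hg₀Q_dvd hXn_ne
    rwa [Polynomial.natDegree_mul hmonicφ.ne_zero hQ_monic.ne_zero, hbφ, hQ_deg, hXn_deg] at h1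
  have hba : b + a ≤ n := hab
  have hbn : b ≤ n := by omega
  -- Q is sigma-invariant, hence comes from K
  have hgi_succ : ∀ i, (gi i).map (σ 1) = gi (i + 1) := by
    intro i
    show (g.map (σ i)).map (σ 1) = g.map (σ (i+1))
    rw [Polynomial.map_map, hσ_comp, add_comm 1 i]
  have hgi_r : gi r = g := by
    show g.map (σ r) = g
    have : σ r = RingHom.id F := RingHom.ext fun x => by rw [hσ_apply]; exact hσr x
    rw [this, Polynomial.map_id]
  have hgi_zero : gi 0 = g := by
    show g.map (σ 0) = g
    have : σ 0 = RingHom.id F := by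
      apply RingHom.ext; intro x; rw [hσ_apply]; simp
    rw [this, Polynomial.map_id]
  have hQ_fix : Q.map (σ 1) = Q := by
    obtain ⟨m, rfl⟩ : ∃ m, r = m + 1 := ⟨r - 1, by omega⟩
    rw [hQdef, Polynomial.map_prod]
    calc ∏ i ∈ Finset.range (m+1), (gi i).map (σ 1)
        = ∏ i ∈ Finset.range (m+1), gi (i+1) := by
          exact Finset.prod_congr rfl fun i _ => hgi_succ i
      _ = (∏ i ∈ Finset.range m, gi (i+1)) * gi (m+1) := Finset.prod_range_succ _ _
      _ = (∏ i ∈ Finset.range m, gi (i+1)) * gi 0 := by rw [hgi_r, hgi_zero]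
      _ = ∏ i ∈ Finset.range (m+1), gi i := (Finset.prod_range_succ' gi m).symm
  obtain ⟨P, hP⟩ : ∃ P : Polynomial K, P.map φ = Q := by
    rw [← Polynomial.mem_lifts]
    rw [Polynomial.lifts_iff_coeff_lifts]
    intro m
    have h1 : σ 1 (Q.coeff m) = Q.coeff m := by
      have := congrArg (fun (pp : Polynomial F) => pp.coeff m) hQ_fix
      simpa [Polynomial.coeff_map] using this
    rw [hσ_apply, pow_one] at h1
    have h2 : Q.coeff m ∈ {x : F | x ^ q = x} := h1
    rwa [fix_eq_range hq2 hK φ] at h2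
  have hP_monic : P.Monic := by
    have := hP ▸ hQ_monic
    exact (φ.injective.monic_map_iff).mpr this
  have hP_deg : P.natDegree = r * a := by
    rw [← hQ_deg, ← hP, P.natDegree_map φ]
  -- ===== the subgroup C0 of Galois-fixed codewords =====
  set Gg : Polynomial F := (g₀.map φ) * g with hGgdef
  set C0 : Set (Fin n → F) := {u | Gg ∣ wordPoly u ∧ ∀ j, (u j) ^ q = u j} with hC0def
  have hfix_dvd : ∀ u : Fin n → F, (∀ j, (u j) ^ q = u j) →
      (Gg ∣ wordPoly u ↔ (g₀.map φ) * Q ∣ wordPoly u) := by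
    intro u hu
    have hufix : ∀ (i : ℕ) (j : Fin n), (u j) ^ q ^ i = u j := by
      intro i j
      induction i with
      | zero => simp
      | succ i ih => rw [pow_succ, pow_mul, ih, hu j]
    have hwfix : ∀ i, (wordPoly u).map (σ i) = wordPoly u := by
      intro i
      rw [wordPoly_map]
      congr 1
      funext j
      rw [hσ_apply, hufix i j]
    constructor
    · intro hd
      have hgf : g ∣ wordPoly u := (dvd_mul_left g (g₀.map φ)).trans hd
      have hgif : ∀ i, gi i ∣ wordPoly u := by
        intro i
        have := Polynomial.map_dvd (σ i) hgf
        rwa [hwfix i] at this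
      have hQf : Q ∣ wordPoly u :=
        Finset.prod_dvd_of_coprime hgi_pairwise fun i _ => hgif i
      exact hgQ_cop.mul_dvd ((dvd_mul_right _ g).trans hd) hQf
    · intro hd
      have hgQ : g ∣ Q := hgi_zero ▸ Finset.dvd_prod_of_mem gi (Finset.mem_range.mpr (by omega))
      exact (mul_dvd_mul_left (g₀.map φ) hgQ).trans hd
  have hC0_card : C0.ncard = q ^ (n - (b + r * a)) := by
    have hdegPn : (g₀ * P).natDegree = b + r * a := by
      rw [Polynomial.natDegree_mul hmonic₀.ne_zero hP_monic.ne_zero, hP_deg]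
    have hKcount := count_dvd (g₀ * P) (hmonic₀.mul hP_monic)
      (le_trans (le_of_eq hdegPn) hbra)
    have hfixφ : ∀ (t : Fin n → K) (j : Fin n), (φ (t j)) ^ q = φ (t j) := by
      intro t j; rw [← map_pow, hcq]
    have himg : (fun (t : Fin n → K) (j : Fin n) => φ (t j)) '' {t | g₀ * P ∣ wordPoly t}
        = C0 := by
      ext u
      constructor
      · rintro ⟨t, ht, rfl⟩
        refine ⟨?_, hfixφ t⟩
        have h1 : (g₀ * P).map φ ∣ (wordPoly t).map φ := Polynomial.map_dvd φ ht
        rw [Polynomial.map_mul, hP, wordPoly_map] at h1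
        exact (hfix_dvd _ (hfixφ t)).mpr h1
      · rintro ⟨hdvd', hufix⟩
        have hurange : ∀ j, u j ∈ Set.range φ := by
          intro j
          rw [← fix_eq_range hq2 hK φ]
          exact hufix j
        choose t ht using hurange
        refine ⟨t, ?_, funext fun j => ht j⟩
        have h1 : (g₀.map φ) * Q ∣ wordPoly u := (hfix_dvd u hufix).mp hdvd'
        rw [← hP, ← Polynomial.map_mul] at h1
        have hu_eq : wordPoly u = (wordPoly t).map φ := by
          rw [wordPoly_map]
          congr 1
          funext j
          rw [ht j]
        rw [hu_eq] at h1
        show g₀ * P ∣ wordPoly t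
        rw [← Polynomial.modByMonic_eq_zero_iff_dvd (hmonic₀.mul hP_monic)]
        have h3 : (wordPoly t).map φ %ₘ ((g₀ * P).map φ) = 0 :=
          (Polynomial.modByMonic_eq_zero_iff_dvd ((hmonic₀.mul hP_monic).map φ)).mpr h1
        rw [← Polynomial.map_modByMonic φ (hmonic₀.mul hP_monic)] at h3
        exact (Polynomial.map_eq_zero_iff φ.injective).mp h3
    have hinj : Function.Injective (fun (t : Fin n → K) (j : Fin n) => φ (t j)) := by
      intro t₁ t₂ h
      funext j
      exact φ.injective (congrFun h j)
    rw [← himg, Set.ncard_image_of_injective _ hinj, hKcount, hK, hdegPn]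
  -- ===== the module setup and the map to E =====
  letI : Algebra K F := φ.toAlgebra
  letI : Algebra K E := χ.toAlgebra
  have halgF : (algebraMap K F) = φ := rfl
  have halgE : (algebraMap K E) = χ := rfl
  set Tlin : F →ₗ[K] F :=
    { toFun := fun x => x ^ q - x
      map_add' := by
        intro x y
        show (x + y) ^ q - (x + y) = (x ^ q - x) + (y ^ q - y)
        have := map_add (σ 1) x y
        simp only [hσ_apply, pow_one] at this
        rw [this]; ring
      map_smul' := by
        intro c x
        show (c • x) ^ q - (c • x) = c • (x ^ q - x)
        have hsmul : ∀ y : F, c • y = φ c * y := fun y => rfl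
        simp only [hsmul]
        rw [mul_pow]
        have : (φ c) ^ q = φ c := by rw [← map_pow, hcq]
        rw [this]; ring } with hTdef
  have hT_apply : ∀ x : F, Tlin x = x ^ q - x := fun x => rfl
  have hψ : ∃ _ψ : (↥(LinearMap.range Tlin) ≃ₗ[K] E), True := by
    have hrankF : Module.finrank K F = r := by
      have h := Module.card_eq_pow_finrank (K := K) (V := F)
      rw [hF, hK] at h
      exact (Nat.pow_right_injective hq2 h.symm)
    have hrankE : Module.finrank K E = r - 1 := by
      have h := Module.card_eq_pow_finrank (K := K) (V := E)
      rw [hE, hK] at h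
      exact (Nat.pow_right_injective hq2 h.symm)
    have hkerset : (LinearMap.ker Tlin : Set F) = Set.range φ := by
      ext x
      simp only [SetLike.mem_coe, LinearMap.mem_ker, hT_apply]
      rw [sub_eq_zero, ← fix_eq_range hq2 hK φ]
      rfl
    haveI : Fintype ↥(LinearMap.ker Tlin) := Fintype.ofFinite _
    have hcardker : Fintype.card ↥(LinearMap.ker Tlin) = q := by
      have e1 : ↥(LinearMap.ker Tlin) ≃ ↥(Set.range φ) := Equiv.setCongr hkerset
      have e2 : ↥(Set.range φ) ≃ K := (Equiv.ofInjective φ φ.injective).symm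
      rw [Fintype.card_congr (e1.trans e2), hK]
    have hrankker : Module.finrank K ↥(LinearMap.ker Tlin) = 1 := by
      have h := Module.card_eq_pow_finrank (K := K) (V := ↥(LinearMap.ker Tlin))
      rw [hcardker, hK] at h
      nth_rewrite 1 [← pow_one q] at h
      exact (Nat.pow_right_injective hq2 h.symm)
    have hrankrange : Module.finrank K ↥(LinearMap.range Tlin) = r - 1 := by
      have h := LinearMap.finrank_range_add_finrank_ker Tlin
      rw [hrankF, hrankker] at h
      omega
    obtain ⟨ψ⟩ := FiniteDimensional.nonempty_linearEquiv_of_finrank_eq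
      (R := K) (M := ↥(LinearMap.range Tlin)) (M' := E) (by rw [hrankrange, hrankE])
    exact ⟨ψ, trivial⟩
  obtain ⟨ψ, -⟩ := hψ
  have hdvd_transfer : ∀ (v : Fin n → ↥(LinearMap.range Tlin)),
      (g₀.map φ ∣ wordPoly (fun j => (v j : F))) ↔
        (g₀.map χ ∣ wordPoly (fun j => ψ (v j))) := by
    intro v
    rw [dvd_wordPoly_iff φ hmonic₀, dvd_wordPoly_iff χ hmonic₀]
    apply forall_congr'
    intro m
    set bc : Fin n → K := fun j => ((X : Polynomial K) ^ (j : ℕ) %ₘ g₀).coeff m with hbc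
    have lhs_eq : (∑ j : Fin n, φ (bc j) * ((v j : F)))
        = ((∑ j : Fin n, bc j • v j : ↥(LinearMap.range Tlin)) : F) := by
      rw [AddSubmonoidClass.coe_finset_sum]
      apply Finset.sum_congr rfl
      intro j _
      rw [SetLike.val_smul, Algebra.smul_def, halgF]
    have rhs_eq : (∑ j : Fin n, χ (bc j) * (ψ (v j))) = ∑ j : Fin n, bc j • ψ (v j) := by
      apply Finset.sum_congr rfl
      intro j _
      rw [Algebra.smul_def, halgE]
    have hmap : ψ (∑ j : Fin n, bc j • v j) = ∑ j : Fin n, bc j • ψ (v j) := by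
      rw [map_sum]
      exact Finset.sum_congr rfl fun j _ => ψ.map_smul _ _
    rw [lhs_eq, rhs_eq, ZeroMemClass.coe_eq_zero, ← hmap]
    exact ⟨fun h => by rw [h, map_zero], fun h => ψ.injective (by rw [h, map_zero])⟩
  -- ===== the sets A (trace-zero mapped code over F) and B (code over E) =====
  set Aset : Set (Fin n → F) :=
    {v | g₀.map φ ∣ wordPoly v ∧ ∀ j, v j ∈ LinearMap.range Tlin} with hAdef
  set Bset : Set (Fin n → E) := {v | g₀.map χ ∣ wordPoly v} with hBdef
  set Φ : (Fin n → E) → (Fin n → F) := fun v' j => (ψ.symm (v' j) : F) with hΦdef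
  have hΦ_inj : Function.Injective Φ := by
    intro v₁ v₂ h12
    funext j
    have := congrFun h12 j
    exact ψ.symm.injective (Subtype.ext this)
  have hΦ_mem : ∀ v', Φ v' ∈ Aset ↔ v' ∈ Bset := by
    intro v'
    have h1 := hdvd_transfer (fun j => ψ.symm (v' j))
    simp only [LinearEquiv.apply_symm_apply] at h1
    constructor
    · rintro ⟨hd, -⟩
      exact h1.mp hd
    · intro hv'
      exact ⟨h1.mpr hv', fun j => (ψ.symm (v' j)).2⟩
  have hΦ_surj : ∀ v ∈ Aset, ∃ v', Φ v' = v := by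
    rintro v ⟨-, hmem⟩
    refine ⟨fun j => ψ ⟨v j, hmem j⟩, ?_⟩
    funext j
    show (ψ.symm (ψ ⟨v j, hmem j⟩) : F) = v j
    rw [LinearEquiv.symm_apply_apply]
  have hΦ_wt : ∀ v', hammingWt (Φ v') = hammingWt v' := by
    intro v'
    unfold hammingWt
    congr 1
    ext j
    simp only [Set.mem_setOf_eq]
    have : (ψ.symm (v' j) : F) = 0 ↔ v' j = 0 := by
      rw [ZeroMemClass.coe_eq_zero, EmbeddingLike.map_eq_zero_iff]
    exact not_congr this
  have hBcount : Bset.ncard = (q ^ (r-1)) ^ (n - b) := by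
    have h := count_dvd (g₀.map χ) hmonicχ (hbχ ▸ hbn)
    rwa [hE, hbχ] at h
  have himgB : Φ '' Bset = Aset := by
    ext v
    constructor
    · rintro ⟨v', hv', rfl⟩
      exact (hΦ_mem v').mpr hv'
    · intro hv
      obtain ⟨v', rfl⟩ := hΦ_surj v hv
      exact ⟨v', (hΦ_mem v').mp hv, rfl⟩
  have hA_card : Aset.ncard = (q ^ (r-1)) ^ (n - b) := by
    rw [← himgB, Set.ncard_image_of_injective _ hΦ_inj, hBcount]
  -- ===== the Frobenius-difference map Θ =====
  set Θ : (Fin n → F) → (Fin n → F) := fun u j => (u j) ^ q - u j with hΘdef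
  set Cset : Set (Fin n → F) := {u | Gg ∣ wordPoly u} with hCdef
  have hC_card : Cset.ncard = (q ^ r) ^ (n - (b + a)) := by
    have h := count_dvd Gg hGg_monic (hGg_deg ▸ hab)
    rwa [hF, hGg_deg] at h
  have hΘ_word : ∀ u : Fin n → F, wordPoly (Θ u) = (wordPoly u).map (σ 1) - wordPoly u := by
    intro u
    have he : Θ u = (fun j => σ 1 (u j)) - u := by
      funext j
      show (u j) ^ q - u j = σ 1 (u j) - u j
      rw [hσ_apply, pow_one]
    rw [he, wordPoly_sub, wordPoly_map]
  have hΘ_mapsto : ∀ u ∈ Cset, Θ u ∈ Aset := by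
    intro u hu
    constructor
    · have h1 : Gg.map (σ 1) ∣ (wordPoly u).map (σ 1) := Polynomial.map_dvd _ hu
      rw [hGgdef, Polynomial.map_mul, hgφ_fix 1] at h1
      have h2 : g₀.map φ ∣ (wordPoly u).map (σ 1) := (dvd_mul_right _ _).trans h1
      have h3 : g₀.map φ ∣ wordPoly u := (dvd_mul_right _ g).trans hu
      rw [hΘ_word u]
      exact dvd_sub h2 h3
    · intro j
      exact LinearMap.mem_range.mpr ⟨u j, rfl⟩
  have hpowq_sub : ∀ x y : F, (x - y) ^ q = x ^ q - y ^ q := by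
    intro x y
    have h := map_sub (σ 1) x y
    simpa [hσ_apply, pow_one] using h
  have hpowq_add : ∀ x y : F, (x + y) ^ q = x ^ q + y ^ q := by
    intro x y
    have h := map_add (σ 1) x y
    simpa [hσ_apply, pow_one] using h
  have hfib : ∀ v ∈ Θ '' Cset, {u ∈ Cset | Θ u = v}.ncard = C0.ncard := by
    rintro v ⟨u₀, hu₀, rfl⟩
    have hset : {u ∈ Cset | Θ u = Θ u₀} = (fun z => z + u₀) '' C0 := by
      ext u
      constructor
      · rintro ⟨huC, hΘeq⟩
        refine ⟨u - u₀, ⟨?_, ?_⟩, by funext j; simp⟩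
        · show Gg ∣ wordPoly (u - u₀)
          rw [wordPoly_sub]
          exact dvd_sub huC hu₀
        · intro j
          have h5 : (u j) ^ q - u j = (u₀ j) ^ q - u₀ j := congrFun hΘeq j
          show (u j - u₀ j) ^ q = u j - u₀ j
          rw [hpowq_sub]
          linear_combination h5
      · rintro ⟨z, ⟨hzC, hzfix⟩, rfl⟩
        refine ⟨?_, ?_⟩
        · show Gg ∣ wordPoly (z + u₀)
          rw [wordPoly_add]
          exact dvd_add hzC hu₀
        · funext j
          show (z j + u₀ j) ^ q - (z j + u₀ j) = (u₀ j) ^ q - u₀ j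
          rw [hpowq_add, hzfix j]
          ring
    rw [hset, Set.ncard_image_of_injective _ (add_left_injective u₀)]
  have hC0_pos : 0 < C0.ncard := by rw [hC0_card]; positivity
  have himg_eq : Θ '' Cset = Aset := by
    have hsub : Θ '' Cset ⊆ Aset := by
      rintro _ ⟨u, hu, rfl⟩
      exact hΘ_mapsto u hu
    have hCcount : Cset.ncard = (Θ '' Cset).ncard * C0.ncard :=
      ncard_eq_ncard_mul Cset (Θ '' Cset) Θ C0.ncard
        (fun u hu => Set.mem_image_of_mem Θ hu) hfib
    have harith : (q ^ r) ^ (n - (b + a)) = (q ^ (r-1)) ^ (n - b) * q ^ (n - (b + r * a)) := by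
      rw [← pow_mul, ← pow_mul, ← pow_add]
      congr 1
      have h1 : 1 ≤ r := by omega
      zify [hab, hbn, hbra, h1]
      ring
    have hAC : Aset.ncard * C0.ncard = Cset.ncard := by
      rw [hC_card, hA_card, hC0_card, harith]
    have heq : Aset.ncard = (Θ '' Cset).ncard :=
      Nat.eq_of_mul_eq_mul_right hC0_pos (hAC.trans hCcount)
    exact Set.eq_of_subset_of_ncard_le hsub (le_of_eq heq) (Set.toFinite Aset)
  -- ===== weights =====
  have hwt : ∀ u : Fin n → F, hammingWt (Θ u) + fqWeight q u = n := by
    intro u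
    unfold hammingWt fqWeight
    have hcompl : {j : Fin n | Θ u j ≠ 0} = {j : Fin n | (u j) ^ q = u j}ᶜ := by
      ext j
      show (u j) ^ q - u j ≠ 0 ↔ _
      rw [sub_ne_zero]
      rfl
    rw [hcompl, add_comm, Set.ncard_add_ncard_compl, Nat.card_eq_fintype_card,
      Fintype.card_fin]
  -- ===== final counting =====
  set Aw : Set (Fin n → F) := {v | v ∈ Aset ∧ hammingWt v = n - w} with hAwdef
  set Bw : Set (Fin n → E) := {v | g₀.map χ ∣ wordPoly v ∧ hammingWt v = n - w} with hBwdef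
  have hiff : ∀ u : Fin n → F, fqWeight q u = w ↔ hammingWt (Θ u) = n - w := by
    intro u
    have h := hwt u
    omega
  have hS_eq : {u : Fin n → F | Gg ∣ wordPoly u ∧ fqWeight q u = w}
      = {u | u ∈ Cset ∧ hammingWt (Θ u) = n - w} := by
    ext u
    simp only [Set.mem_setOf_eq]
    exact and_congr_right fun _ => hiff u
  have hmain : {u : Fin n → F | u ∈ Cset ∧ hammingWt (Θ u) = n - w}.ncard
      = Aw.ncard * C0.ncard := by
    apply ncard_eq_ncard_mul _ Aw Θ C0.ncard
    · rintro u ⟨huC, hwtu⟩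
      exact ⟨hΘ_mapsto u huC, hwtu⟩
    · rintro v ⟨hvA, hvwt⟩
      have hseteq : {u | u ∈ {u | u ∈ Cset ∧ hammingWt (Θ u) = n - w} ∧ Θ u = v}
          = {u ∈ Cset | Θ u = v} := by
        ext u
        constructor
        · rintro ⟨⟨h1, _⟩, h3⟩
          exact ⟨h1, h3⟩
        · rintro ⟨h1, h3⟩
          exact ⟨⟨h1, by rw [h3, hvwt]⟩, h3⟩
      rw [hseteq]
      exact hfib v (himg_eq ▸ hvA)
  have hABw : Aw.ncard = Bw.ncard := by
    have himgBw : Φ '' Bw = Aw := by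
      ext v
      constructor
      · rintro ⟨v', ⟨hv'd, hv'w⟩, rfl⟩
        exact ⟨(hΦ_mem v').mpr hv'd, by rw [hΦ_wt v', hv'w]⟩
      · rintro ⟨hvA, hvw⟩
        obtain ⟨v', rfl⟩ := hΦ_surj v hvA
        exact ⟨v', ⟨(hΦ_mem v').mp hvA, by rw [← hΦ_wt v', hvw]⟩, rfl⟩
    rw [← himgBw, Set.ncard_image_of_injective _ hΦ_inj]
  have hexp : n - r * a - b = n - (b + r * a) := by rw [Nat.sub_sub, Nat.add_comm]
  rw [hS_eq, hmain, hABw, hC0_card, hexp, mul_comm]
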